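/- For the softmax distribution q_i(λ) = exp(δ_i/λ)/Z(λ) with λ > 0, the derivative of the Shannon entropy H(Q(λ)) with respect to λ equals Var_{Q(λ)}(δ)/λ³, which is nonnegative. -/

import Mathlib

open Real Finset Filter Topology

noncomputable def Z (n : ℕ) (δ : Fin n → ℝ) (t : ℝ) : ℝ := ∑ j, Real.exp (δ j / t)
noncomputable def q (n : ℕ) (δ : Fin n → ℝ) (t : ℝ) (i : Fin n) : ℝ :=
  Real.exp (δ i / t) / Z n δ t
noncomputable def Egap (n : ℕ) (δ : Fin n → ℝ) (t : ℝ) : ℝ := ∑ i, q n δ t i * δ i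
noncomputable def Hent (n : ℕ) (δ : Fin n → ℝ) (t : ℝ) : ℝ :=
  -∑ i, q n δ t i * Real.log (q n δ t i)
noncomputable def Vr (n : ℕ) (δ : Fin n → ℝ) (t : ℝ) : ℝ :=
  (∑ i, q n δ t i * (δ i) ^ 2) - (Egap n δ t) ^ 2

lemma Z_pos (n : ℕ) (hn : 0 < n) (δ : Fin n → ℝ) (t : ℝ) : 0 < Z n δ t := by
  have : Nonempty (Fin n) := Fin.pos_iff_nonempty.mp hn
  exact Finset.sum_pos (fun i _ => Real.exp_pos _) Finset.univ_nonempty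

lemma sum_q (n : ℕ) (hn : 0 < n) (δ : Fin n → ℝ) (t : ℝ) : ∑ i, q n δ t i = 1 := by
  unfold q
  rw [← Finset.sum_div]
  exact div_self (Z_pos n hn δ t).ne'

lemma Hent_eq (n : ℕ) (hn : 0 < n) (δ : Fin n → ℝ) (t : ℝ) (ht : t ≠ 0) :
    Hent n δ t = Real.log (Z n δ t)
      - (∑ i, Real.exp (δ i / t) * δ i) / (t * Z n δ t) := by
  have hZ := Z_pos n hn δ t
  have key : ∀ i : Fin n, q n δ t i * Real.log (q n δ t i)
      = (Real.exp (δ i / t) * δ i) / (t * Z n δ t) - q n δ t i * Real.log (Z n δ t) := by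
    intro i
    unfold q
    rw [Real.log_div (Real.exp_pos _).ne' hZ.ne', Real.log_exp]
    field_simp
  unfold Hent
  simp_rw [key]
  rw [Finset.sum_sub_distrib, ← Finset.sum_div, ← Finset.sum_mul, sum_q n hn δ t]
  ring

theorem stmt_3 (n : ℕ) (hn : 0 < n) (δ : Fin n → ℝ) (t : ℝ) (ht : 0 < t) :
    HasDerivAt (Hent n δ) (Vr n δ t / t ^ 3) t ∧ 0 ≤ Vr n δ t / t ^ 3 := by
  have ht' : t ≠ 0 := ht.ne'
  have hZ := Z_pos n hn δ t
  set A : ℝ := Z n δ t with hA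
  set B : ℝ := ∑ i, Real.exp (δ i / t) * δ i with hB
  set C : ℝ := ∑ i, Real.exp (δ i / t) * δ i ^ 2 with hC
  -- derivative of each exponential
  have hexp : ∀ i : Fin n, HasDerivAt (fun s => Real.exp (δ i / s))
      (Real.exp (δ i / t) * (δ i * (-(t ^ 2)⁻¹))) t := by
    intro i
    have h1 : HasDerivAt (fun s : ℝ => δ i / s) (δ i * (-(t ^ 2)⁻¹)) t := by
      simpa [div_eq_mul_inv] using (hasDerivAt_inv ht').const_mul (δ i)
    exact h1.exp
  have hZ' : HasDerivAt (Z n δ) (-B / t ^ 2) t := by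
    have : HasDerivAt (fun s => ∑ j, Real.exp (δ j / s))
        (∑ j, Real.exp (δ j / t) * (δ j * (-(t ^ 2)⁻¹))) t :=
      HasDerivAt.fun_sum (fun j _ => hexp j)
    have heq : (∑ j, Real.exp (δ j / t) * (δ j * (-(t ^ 2)⁻¹))) = -B / t ^ 2 := by
      rw [hB, neg_div, Finset.sum_div, ← Finset.sum_neg_distrib]
      exact Finset.sum_congr rfl fun j _ => by ring
    exact heq ▸ this
  have hE1' : HasDerivAt (fun s => ∑ i, Real.exp (δ i / s) * δ i) (-C / t ^ 2) t := by
    have : HasDerivAt (fun s => ∑ i, Real.exp (δ i / s) * δ i)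
        (∑ i, Real.exp (δ i / t) * (δ i * (-(t ^ 2)⁻¹)) * δ i) t :=
      HasDerivAt.fun_sum (fun i _ => (hexp i).mul_const (δ i))
    have heq : (∑ i, Real.exp (δ i / t) * (δ i * (-(t ^ 2)⁻¹)) * δ i) = -C / t ^ 2 := by
      rw [hC, neg_div, Finset.sum_div, ← Finset.sum_neg_distrib]
      exact Finset.sum_congr rfl fun i _ => by ring
    exact heq ▸ this
  have hden : HasDerivAt (fun s => s * Z n δ s) (1 * A + t * (-B / t ^ 2)) t :=
    (hasDerivAt_id t).mul hZ'
  have hdenne : t * A ≠ 0 := by positivity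
  have hg : HasDerivAt (fun s => Real.log (Z n δ s) - (∑ i, Real.exp (δ i / s) * δ i) / (s * Z n δ s))
      ((-B / t ^ 2) / A - ((-C / t ^ 2) * (t * A) - B * (1 * A + t * (-B / t ^ 2))) / (t * A) ^ 2) t :=
    (hZ'.log hZ.ne').sub (hE1'.div hden hdenne)
  have hVr : Vr n δ t = C / A - (B / A) ^ 2 := by
    unfold Vr Egap q
    simp_rw [div_mul_eq_mul_div]
    rw [hC, hB, Finset.sum_div, Finset.sum_div, hA]
  have hD : (-B / t ^ 2) / A - ((-C / t ^ 2) * (t * A) - B * (1 * A + t * (-B / t ^ 2))) / (t * A) ^ 2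
      = Vr n δ t / t ^ 3 := by
    rw [hVr]
    field_simp
    ring
  have hderiv : HasDerivAt (Hent n δ) (Vr n δ t / t ^ 3) t := by
    have hev : Hent n δ =ᶠ[𝓝 t] fun s =>
        Real.log (Z n δ s) - (∑ i, Real.exp (δ i / s) * δ i) / (s * Z n δ s) := by
      filter_upwards [eventually_gt_nhds ht] with s hs
      exact Hent_eq n hn δ s hs.ne'
    exact hev.hasDerivAt_iff.mpr (hD ▸ hg)
  refine ⟨hderiv, ?_⟩
  have hVnn : 0 ≤ Vr n δ t := by
    have hrepr : ∑ i, q n δ t i * (δ i - Egap n δ t) ^ 2 = Vr n δ t := by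
      unfold Vr
      have expand : ∀ i : Fin n, q n δ t i * (δ i - Egap n δ t) ^ 2
          = q n δ t i * δ i ^ 2 - 2 * Egap n δ t * (q n δ t i * δ i)
            + Egap n δ t ^ 2 * q n δ t i := fun i => by ring
      simp_rw [expand]
      rw [Finset.sum_add_distrib, Finset.sum_sub_distrib, ← Finset.mul_sum, ← Finset.mul_sum,
        sum_q n hn δ t, ← Egap]
      ring
    rw [← hrepr]
    refine Finset.sum_nonneg fun i _ => mul_nonneg ?_ (sq_nonneg _)
    exact le_of_lt (div_pos (Real.exp_pos _) hZ)
  positivity
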